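/- arXiv:1605.03753 — 5 statements merged into one kernel-verified Lean document; each statement's English description precedes it below -/
import Mathlib

section
/- Let p ≥ 7 be a natural number and let (u_n) be the integer sequence defined by u_0 = 1, u_1 = p−4 and u_{n+2} = (p−4)·u_{n+1} − u_n. Then for all natural numbers n ≥ 1 and k ≥ 1, (p−5)·u_{n+k} + (p−5)·u_n + Σ_{i=1}^{k−1} (p−6)·u_{n+i} = u_{n+k+1} + u_{n−1}. -/
theorem stmt_0 (p : ℕ) (hp : 7 ≤ p) (u : ℕ → ℤ)
    (hu0 : u 0 = 1) (hu1 : u 1 = (p : ℤ) - 4)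
    (hurec : ∀ n, u (n + 2) = ((p : ℤ) - 4) * u (n + 1) - u n) :
    ∀ n k : ℕ, 1 ≤ n → 1 ≤ k →
      ((p : ℤ) - 5) * u (n + k) + ((p : ℤ) - 5) * u n +
        ∑ i ∈ Finset.Icc 1 (k - 1), ((p : ℤ) - 6) * u (n + i)
      = u (n + k + 1) + u (n - 1) := by
  intro n k hn hk
  obtain ⟨m, rfl⟩ : ∃ m, n = m + 1 := ⟨n - 1, by omega⟩
  induction k with
  | zero => omega
  | succ k ih =>
    rcases Nat.eq_zero_or_pos k with rfl | hk'
    · have hA := hurec m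
      have hB := hurec (m + 1)
      rw [show (1:ℕ) - 1 = 0 from rfl, Finset.Icc_eq_empty (by omega), Finset.sum_empty,
        show m + 1 + 1 = m + 2 from rfl, show m + 1 + 1 + 1 = m + 3 from rfl,
        show m + 1 - 1 = m from rfl]
      rw [show m + 1 + 2 = m + 3 from rfl, show m + 1 + 1 = m + 2 from rfl] at hB
      linarith
    · have ih' := ih hk'
      have hsum : Finset.Icc 1 (k + 1 - 1) = insert k (Finset.Icc 1 (k - 1)) := by
        rw [Nat.add_sub_cancel]
        ext x; simp [Finset.mem_insert]; omega
      rw [hsum, Finset.sum_insert (by simp; omega)]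
      have h2 := hurec (m + 1 + k)
      have h3 : m + 1 + (k + 1) = m + 1 + k + 1 := by ring
      have h4 : m + 1 + (k + 1) + 1 = m + 1 + k + 2 := by ring
      rw [h3, show m + 1 + k + 1 + 1 = m + 1 + k + 2 from rfl, h2]
      linarith [ih']
end

section
/- Let p ≥ 7 be a natural number and let (u_n) be the integer sequence defined by u_0 = 1, u_1 = p−4 and u_{n+2} = (p−4)·u_{n+1} − u_n. Then for all natural numbers n ≥ 0 and k ≥ 1, (p−5)·u_{n+k} + Σ_{i=1}^{k−1} (p−6)·u_{n+i} < u_{n+k+1}. -/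
theorem stmt_4 (p : ℕ) (hp : 7 ≤ p) (u : ℕ → ℤ)
    (hu0 : u 0 = 1) (hu1 : u 1 = (p : ℤ) - 4)
    (hurec : ∀ n, u (n + 2) = ((p : ℤ) - 4) * u (n + 1) - u n) :
    ∀ n k : ℕ, 1 ≤ k →
      ((p : ℤ) - 5) * u (n + k) +
        ∑ i ∈ Finset.Icc 1 (k - 1), ((p : ℤ) - 6) * u (n + i)
      < u (n + k + 1) := by
  have hp' : (7 : ℤ) ≤ (p : ℤ) := by exact_mod_cast hp
  -- the sequence is positive and strictly increasing
  have key : ∀ n, 1 ≤ u n ∧ u n < u (n + 1) := by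
    intro n
    induction n with
    | zero => constructor <;> simp [hu0, hu1] <;> linarith
    | succ m ih =>
      obtain ⟨h1, h2⟩ := ih
      have hr := hurec m
      constructor
      · linarith
      · nlinarith [hr]
  -- auxiliary form of the statement
  have aux : ∀ n m : ℕ,
      ((p : ℤ) - 5) * u (n + m + 1) +
        ∑ i ∈ Finset.Icc 1 m, ((p : ℤ) - 6) * u (n + i)
      < u (n + m + 2) := by
    intro n m
    induction m with
    | zero =>
      simp only [Nat.add_zero, Finset.Icc_self]
      have hr := hurec n
      have hk := (key n).2
      simp
      linarith
    | succ m ih =>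
      rw [Finset.sum_Icc_succ_top (by omega : 1 ≤ m + 1)]
      have hr := hurec (n + m + 1)
      have h2 : n + (m + 1) + 2 = n + m + 1 + 2 := by omega
      have h3 : n + (m + 1) + 1 = n + m + 2 := by omega
      have h4 : n + (m + 1) = n + m + 1 := by omega
      rw [h2, h3, h4]
      have hk := (key (n + m + 1)).1
      linarith
  intro n k hk
  obtain ⟨m, rfl⟩ : ∃ m, k = m + 1 := ⟨k - 1, by omega⟩
  have h : m + 1 - 1 = m := by omega
  rw [h]
  have h2 : n + (m + 1) = n + m + 1 := by omega
  have h3 : n + m + 1 + 1 = n + m + 2 := by omega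
  rw [h2, h3]
  exact aux n m
end

section
/- Let p ≥ 7 be a natural number, let (u_n) be the integer sequence defined by u_0 = 1, u_1 = p−4 and u_{n+2} = (p−4)·u_{n+1} − u_n, and let U_n = Σ_{k=0}^{n} u_k. Then for every natural number n ≥ 1, U_n + (p−6)·u_n < u_{n+1} < U_n + (p−5)·u_n. -/
theorem stmt_8 (p : ℕ) (hp : 7 ≤ p) (u : ℕ → ℤ)
    (hu0 : u 0 = 1) (hu1 : u 1 = (p : ℤ) - 4)
    (hurec : ∀ n, u (n + 2) = ((p : ℤ) - 4) * u (n + 1) - u n)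
    (U : ℕ → ℤ) (hU : ∀ n, U n = ∑ k ∈ Finset.range (n + 1), u k) :
    ∀ n : ℕ, 1 ≤ n →
      U n + ((p : ℤ) - 6) * u n < u (n + 1) ∧ u (n + 1) < U n + ((p : ℤ) - 5) * u n := by
  have hp7 : (7 : ℤ) ≤ (p : ℤ) := by exact_mod_cast hp
  have hmono : ∀ n, 1 ≤ u n ∧ u n ≤ u (n + 1) := by
    intro n
    induction n with
    | zero =>
      constructor
      · rw [hu0]
      · rw [hu0, hu1]; linarith
    | succ k ih =>
      obtain ⟨h1, h2⟩ := ih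
      refine ⟨by linarith, ?_⟩
      rw [hurec]
      nlinarith
  have hUrec : ∀ n, U (n + 1) = U n + u (n + 1) := by
    intro n; rw [hU, hU, Finset.sum_range_succ]
  have hU0 : U 0 = 1 := by rw [hU]; simp [hu0]
  have hUpos : ∀ n, 1 ≤ U n := by
    intro n
    induction n with
    | zero => rw [hU0]
    | succ k ih =>
      rw [hUrec]
      have := (hmono (k + 1)).1
      linarith
  have hA : ∀ n, 1 ≤ n → 1 ≤ u (n + 1) - U n - ((p : ℤ) - 6) * u n := by
    intro n hn
    induction n, hn using Nat.le_induction with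
    | base =>
      rw [show (1 : ℕ) + 1 = 0 + 2 from rfl, hurec 0, hUrec 0, hu0, hu1, hU0]
      nlinarith
    | succ k hk ih =>
      rw [show k + 1 + 1 = k + 2 from rfl, hurec, hUrec]
      have h1 := (hmono k).1
      nlinarith [mul_nonneg (by linarith : (0:ℤ) ≤ (p : ℤ) - 7) (by linarith : (0:ℤ) ≤ u k)]
  have hB : ∀ n, 1 ≤ n → 1 ≤ U n + ((p : ℤ) - 5) * u n - u (n + 1) := by
    intro n hn
    induction n, hn using Nat.le_induction with
    | base =>
      rw [show (1 : ℕ) + 1 = 0 + 2 from rfl, hurec 0, hUrec 0, hu0, hu1, hU0]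
      nlinarith
    | succ k hk ih =>
      rw [show k + 1 + 1 = k + 2 from rfl, hurec, hUrec]
      have h1 := (hmono k).1
      have h2 := hUpos k
      linarith
  intro n hn
  exact ⟨by linarith [hA n hn], by linarith [hB n hn]⟩
end

section
/- Let p ≥ 7 be a natural number, let (u_n) be the integer sequence defined by u_0 = 1, u_1 = p−4, u_{n+2} = (p−4)·u_{n+1} − u_n, and let (y_n) be the integer sequence defined by y_0 = 1, y_1 = p−5, y_{n+2} = (p−4)·y_{n+1} − y_n. Then for every natural number n, Σ_{k=0}^{n+1} y_k = u_{n+1}; equivalently, with Y_n = Σ_{k=0}^{n} y_k and U_n = Σ_{k=0}^{n} u_k, one has Y_{n+1} = U_{n+1} − U_n. -/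
theorem stmt_12 (p : ℕ) (hp : 7 ≤ p)
    (u : ℕ → ℤ) (hu0 : u 0 = 1) (hu1 : u 1 = (p : ℤ) - 4)
    (hurec : ∀ n, u (n + 2) = ((p : ℤ) - 4) * u (n + 1) - u n)
    (y : ℕ → ℤ) (hy0 : y 0 = 1) (hy1 : y 1 = (p : ℤ) - 5)
    (hyrec : ∀ n, y (n + 2) = ((p : ℤ) - 4) * y (n + 1) - y n)
    (Y U : ℕ → ℤ)
    (hY : ∀ n, Y n = ∑ k ∈ Finset.range (n + 1), y k)
    (hU : ∀ n, U n = ∑ k ∈ Finset.range (n + 1), u k) :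
    ∀ n : ℕ, (∑ k ∈ Finset.range (n + 2), y k) = u (n + 1) ∧
      Y (n + 1) = U (n + 1) - U n := by
  have hdiff : ∀ n : ℕ, y (n + 1) = u (n + 1) - u n ∧ y (n + 2) = u (n + 2) - u (n + 1) := by
    intro n
    induction n with
    | zero =>
      constructor
      · rw [hy1, hu1, hu0]; ring
      · rw [hyrec 0, hurec 0, hy1, hy0, hu1, hu0]; ring
    | succ m ih =>
      refine ⟨ih.2, ?_⟩
      rw [hyrec (m + 1), hurec (m + 1), ih.1, ih.2]
      linear_combination hurec m
  have hsum : ∀ n : ℕ, (∑ k ∈ Finset.range (n + 2), y k) = u (n + 1) := by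
    intro n
    induction n with
    | zero =>
      simp [Finset.sum_range_succ, hy0, hy1, hu1]
      ring
    | succ m ih =>
      rw [Finset.sum_range_succ, ih, (hdiff m).2]; ring
  intro n
  refine ⟨hsum n, ?_⟩
  rw [hY, hU, hU, Finset.sum_range_succ u (n + 1), show n + 1 + 1 = n + 2 from rfl, hsum n]
  ring
end

section
/- Let p ≥ 7 be a natural number and let (u_n) be the sequence of natural numbers defined by u_0 = 1, u_1 = p−4 and u_{n+2} = (p−4)·u_{n+1} − u_n. Then every natural number N can be written as N = Σ_{i=0}^{k} a_i·u_i for some natural number k and digits a_i with 0 ≤ a_i ≤ p−5 for every i. -/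
theorem stmt_16 (p : ℕ) (hp : 7 ≤ p)
    (u : ℕ → ℕ) (hu0 : u 0 = 1) (hu1 : u 1 = p - 4)
    (hurec : ∀ n, u (n + 2) + u n = (p - 4) * u (n + 1)) :
    ∀ N : ℕ, ∃ (k : ℕ) (a : ℕ → ℕ), (∀ i, a i ≤ p - 5) ∧
      N = ∑ i ∈ Finset.range (k + 1), a i * u i := by
  have hq : 3 ≤ p - 4 := by omega
  have hmono : ∀ n, u n < u (n + 1) := by
    intro n
    induction n with
    | zero => show u 0 < u 1; omega
    | succ n ih =>
      have h := hurec n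
      have h3 : 3 * u (n + 1) ≤ (p - 4) * u (n + 1) :=
        Nat.mul_le_mul_right _ hq
      show u (n + 1) < u (n + 2)
      omega
  have hpos : ∀ n, 1 ≤ u n := by
    intro n
    induction n with
    | zero => omega
    | succ n ih => have := hmono n; omega
  have key : ∀ k N, N < u (k + 1) → ∃ a : ℕ → ℕ, (∀ i, a i ≤ p - 5) ∧
      N = ∑ i ∈ Finset.range (k + 1), a i * u i := by
    intro k
    induction k with
    | zero =>
      intro N hN
      have hN' : N < p - 4 := by rw [← hu1]; exact hN
      refine ⟨fun _ => N, fun i => ?_, ?_⟩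
      · show N ≤ p - 5; omega
      · simp [hu0]
    | succ k ih =>
      intro N hN
      have hN' : N < u (k + 2) := hN
      have hup : 0 < u (k + 1) := hpos (k + 1)
      have hlt : N < (p - 4) * u (k + 1) := by
        have h := hurec k
        have h1 := hpos k
        omega
      have hd : N / u (k + 1) < p - 4 := Nat.div_lt_iff_lt_mul hup |>.mpr
        hlt
      have hr : N % u (k + 1) < u (k + 1) := Nat.mod_lt _ hup
      obtain ⟨a, ha, hsum⟩ := ih (N % u (k + 1)) hr
      refine ⟨fun i => if i = k + 1 then N / u (k + 1) else a i, ?_, ?_⟩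
      · intro i
        by_cases hi : i = k + 1
        · show (if i = k + 1 then N / u (k + 1) else a i) ≤ p - 5
          rw [if_pos hi]; omega
        · show (if i = k + 1 then N / u (k + 1) else a i) ≤ p - 5
          rw [if_neg hi]; exact ha i
      · rw [Finset.sum_range_succ]
        have heq : ∑ i ∈ Finset.range (k + 1),
            (if i = k + 1 then N / u (k + 1) else a i) * u i
            = ∑ i ∈ Finset.range (k + 1), a i * u i := by
          apply Finset.sum_congr rfl
          intro i hi
          rw [Finset.mem_range] at hi
          simp [Nat.ne_of_lt hi]
        rw [heq,
          show (fun i => if i = k + 1 then N / u (k + 1) else a i) (k + 1)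
            = N / u (k + 1) from if_pos rfl, ← hsum]
        exact (Nat.mod_add_div' N (u (k + 1))).symm
  intro N
  have hge : ∀ n, n + 1 ≤ u n := by
    intro n
    induction n with
    | zero => omega
    | succ n ih => have := hmono n; omega
  obtain ⟨a, ha, hsum⟩ := key N N (by have := hge (N + 1); omega)
  exact ⟨N, a, ha, hsum⟩
end
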